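/- Let M be the monoid, under composition, of all maps f : ℚ → ℚ such that a < b implies f(a) < f(b) (strictly increasing maps). Then the Zariski topology on M coincides with the topology of pointwise convergence on M; in particular, the topology of pointwise convergence is the coarsest Hausdorff semigroup topology on M. -/

import Mathlib

open Topology

/-- Evaluation of the word `p_k · s · p_{k-1} · s ⋯ s · p_0` at `s`,
where the word is given by its lowest coefficient `p₀` and the list
`ps = [p₁, …, p_k]` of the remaining coefficients. -/
def wordEval {S : Type*} [Monoid S] (s : S) (p₀ : S) (ps : List S) : S :=
  ps.foldl (fun acc q => q * s * acc) p₀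

/-- The Zariski topology on a monoid `S`: generated by the sets
`M_{φ,ψ} = {s | φ(s) ≠ ψ(s)}` for all pairs of words `φ, ψ` with coefficients in `S`. -/
def zariskiTopology (S : Type*) [Monoid S] : TopologicalSpace S :=
  TopologicalSpace.generateFrom
    { M : Set S | ∃ (p₀ : S) (ps : List S) (q₀ : S) (qs : List S),
        M = { s : S | wordEval s p₀ ps ≠ wordEval s q₀ qs } }

/-- The topology of pointwise convergence on functions `A → A`:
the product topology where every factor `A` is discrete. -/
def pwTop (A : Type*) : TopologicalSpace (A → A) :=
  @Pi.topologicalSpace A (fun _ => A) (fun _ => ⊥)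

/-- The monoid of all strictly increasing self-maps of `ℚ` (the endomorphism monoid of `⟨ℚ, <⟩`),
as a submonoid of `Function.End ℚ`. -/
def strictMonoEndQ : Submonoid (Function.End ℚ) where
  carrier := {f | StrictMono f}
  one_mem' := strictMono_id
  mul_mem' := fun hf hg => hf.comp hg

/-- `T` is a Hausdorff semigroup topology on the monoid `M`. -/
def IsHausdorffSemigroupTopology {M : Type*} [Monoid M] (T : TopologicalSpace M) : Prop :=
  @T2Space M T ∧
    @Continuous (M × M) M (@instTopologicalSpaceProd M M T T) T (fun p => p.1 * p.2)

/-! ### Generic lemma: the Zariski topology is coarser than any Hausdorff semigroup topology -/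

theorem le_zariski_of_hausdorff {S : Type*} [Monoid S] (T : TopologicalSpace S)
    (hT : IsHausdorffSemigroupTopology T) : T ≤ zariskiTopology S := by
  letI := T
  obtain ⟨ht2, hmul⟩ := hT
  haveI : T2Space S := ht2
  apply le_generateFrom
  rintro U ⟨p₀, ps, q₀, qs, rfl⟩
  have key : ∀ (rs : List S) (c : S → S), Continuous c →
      Continuous (fun s => rs.foldl (fun acc q => q * s * acc) (c s)) := by
    intro rs
    induction rs with
    | nil => intro c hc; simpa using hc
    | cons q t ih =>
      intro c hc
      have hc' : Continuous fun s => q * s * c s := by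
        have h0 : Continuous fun s : S => (q, s) := continuous_const.prodMk continuous_id
        have h1 : Continuous fun s : S => q * s := hmul.comp h0
        have h2 : Continuous fun s : S => (q * s, c s) := h1.prodMk hc
        exact hmul.comp h2
      simpa [List.foldl_cons] using ih _ hc'
  have h1 : Continuous fun s : S => wordEval s p₀ ps := key ps _ continuous_const
  have h2 : Continuous fun s : S => wordEval s q₀ qs := key qs _ continuous_const
  have hcl : IsClosed {s : S | wordEval s p₀ ps = wordEval s q₀ qs} := isClosed_eq h1 h2
  have heq : {s : S | wordEval s p₀ ps ≠ wordEval s q₀ qs}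
      = {s : S | wordEval s p₀ ps = wordEval s q₀ qs}ᶜ := rfl
  rw [heq]
  exact hcl.isOpen_compl

/-! ### The pointwise topology as a generated topology -/

theorem pwTop_eq_generateFrom :
    pwTop ℚ = TopologicalSpace.generateFrom
      {U : Set (ℚ → ℚ) | ∃ a b : ℚ, U = {f : ℚ → ℚ | f a = b}} := by
  letI : TopologicalSpace ℚ := ⊥
  haveI : DiscreteTopology ℚ := ⟨rfl⟩
  apply le_antisymm
  · refine le_generateFrom (t := pwTop ℚ) ?_
    rintro U ⟨a, b, rfl⟩
    show IsOpen[Pi.topologicalSpace] {f : ℚ → ℚ | f a = b}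
    have h : {f : ℚ → ℚ | f a = b} = (fun f : ℚ → ℚ => f a) ⁻¹' {b} := rfl
    rw [h]
    exact (continuous_apply a).isOpen_preimage _ (isOpen_discrete _)
  · show TopologicalSpace.generateFrom _ ≤
      ⨅ a : ℚ, TopologicalSpace.induced (fun f : ℚ → ℚ => f a) ⊥
    refine le_iInf fun a => ?_
    rw [← continuous_iff_le_induced]
    exact (@continuous_discrete_rng (β := ℚ) (ℚ → ℚ)
        (TopologicalSpace.generateFrom {U : Set (ℚ → ℚ) | ∃ a b : ℚ, U = {f : ℚ → ℚ | f a = b}})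
        ⊥ (@DiscreteTopology.mk ℚ ⊥ rfl) (fun f => f a)).2
      (fun b => TopologicalSpace.GenerateOpen.basic _ ⟨a, b, rfl⟩)

/-! ### Explicit strictly monotone gadget maps -/

/-- Jump map: identity up to `b`, shifted by `1` above `b`. -/
def jumpM (b : ℚ) : ℚ → ℚ := fun y => if y ≤ b then y else y + 1

/-- Like `jumpM` but also moving `b` itself to `b + 1`. -/
def jumpN (b : ℚ) : ℚ → ℚ := fun y => if y < b then y else y + 1

theorem jumpM_strictMono (b : ℚ) : StrictMono (jumpM b) := by
  intro x y hxy
  unfold jumpM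
  split_ifs with h1 h2 h2 <;> linarith

theorem jumpN_strictMono (b : ℚ) : StrictMono (jumpN b) := by
  intro x y hxy
  unfold jumpN
  split_ifs with h1 h2 h2 <;> linarith

theorem jump_ne_iff (b z : ℚ) : jumpM b z ≠ jumpN b z ↔ z = b := by
  unfold jumpM jumpN
  constructor
  · intro h
    by_contra hz
    rcases lt_trichotomy z b with h1 | h1 | h1
    · simp [le_of_lt h1, h1] at h
    · exact hz h1
    · simp [not_le.2 h1, not_lt.2 (le_of_lt h1)] at h
  · intro h; subst h
    simp only [le_refl, if_true, lt_irrefl, if_false]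
    intro h; linarith [h]

/-- Strictly monotone map with range contained in `(a-1, a] ∪ (a+1, ∞)`, attaining `a` at `a`. -/
def rOne (a : ℚ) : ℚ → ℚ := fun x => if x ≤ a then a - (a - x) / (1 + (a - x)) else x + 1

/-- Strictly monotone map with range contained in `(-∞, a-1) ∪ [a, a+1)`, attaining `a` at `a`. -/
def rTwo (a : ℚ) : ℚ → ℚ := fun x => if x < a then x - 1 else a + (x - a) / (1 + (x - a))

theorem frac_nonneg {u : ℚ} (hu : 0 ≤ u) : 0 ≤ u / (1 + u) :=
  div_nonneg hu (by linarith)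

theorem frac_lt_one {u : ℚ} (hu : 0 ≤ u) : u / (1 + u) < 1 := by
  rw [div_lt_one (by linarith)]; linarith

theorem frac_lt_frac {u v : ℚ} (hu : 0 ≤ u) (huv : u < v) :
    u / (1 + u) < v / (1 + v) := by
  rw [div_lt_div_iff₀ (by linarith) (by linarith)]
  nlinarith

theorem rOne_strictMono (a : ℚ) : StrictMono (rOne a) := by
  intro x y hxy
  unfold rOne
  split_ifs with h1 h2 h2
  · have : (a - y) / (1 + (a - y)) < (a - x) / (1 + (a - x)) :=
      frac_lt_frac (by linarith) (by linarith)
    linarith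
  · have hx : 0 ≤ (a - x) / (1 + (a - x)) := frac_nonneg (by linarith)
    linarith [not_le.1 h2]
  · exact absurd (le_of_lt (lt_of_lt_of_le hxy h2)) h1
  · linarith

theorem rTwo_strictMono (a : ℚ) : StrictMono (rTwo a) := by
  intro x y hxy
  unfold rTwo
  split_ifs with h1 h2 h2
  · linarith
  · have hy : 0 ≤ (y - a) / (1 + (y - a)) := frac_nonneg (by linarith [not_lt.1 h2])
    linarith
  · exact absurd (lt_trans hxy h2) h1
  · have : (x - a) / (1 + (x - a)) < (y - a) / (1 + (y - a)) :=
      frac_lt_frac (by linarith [not_lt.1 h1]) (by linarith)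
    linarith

theorem rOne_apply_self (a : ℚ) : rOne a a = a := by
  unfold rOne; simp

theorem rTwo_apply_self (a : ℚ) : rTwo a a = a := by
  unfold rTwo; simp

theorem rOne_range (a : ℚ) (x : ℚ) :
    (a - 1 < rOne a x ∧ rOne a x ≤ a) ∨ a + 1 < rOne a x := by
  unfold rOne
  split_ifs with h
  · left
    have h0 : 0 ≤ (a - x) / (1 + (a - x)) := frac_nonneg (by linarith)
    have h1 : (a - x) / (1 + (a - x)) < 1 := frac_lt_one (by linarith)
    constructor <;> linarith
  · right; linarith [not_le.1 h]

theorem rTwo_range (a : ℚ) (x : ℚ) :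
    rTwo a x < a - 1 ∨ (a ≤ rTwo a x ∧ rTwo a x < a + 1) := by
  unfold rTwo
  split_ifs with h
  · left; linarith
  · right
    have h0 : 0 ≤ (x - a) / (1 + (x - a)) := frac_nonneg (by linarith [not_lt.1 h])
    have h1 : (x - a) / (1 + (x - a)) < 1 := frac_lt_one (by linarith [not_lt.1 h])
    constructor <;> linarith

/-! ### The key: point-evaluation sets are Zariski open -/

theorem zariski_isOpen_eval (a b : ℚ) :
    (zariskiTopology ↥strictMonoEndQ).IsOpen {s : ↥strictMonoEndQ | s.1 a = b} := by
  set M := ↥strictMonoEndQ with hM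
  let m : M := ⟨jumpM b, jumpM_strictMono b⟩
  let n : M := ⟨jumpN b, jumpN_strictMono b⟩
  let r1 : M := ⟨rOne a, rOne_strictMono a⟩
  let r2 : M := ⟨rTwo a, rTwo_strictMono a⟩
  have word_ne : ∀ (r : M) (s : M),
      (wordEval s r [m] ≠ wordEval s r [n]) ↔ ∃ x : ℚ, s.1 (r.1 x) = b := by
    intro r s
    have h1 : wordEval s r [m] = m * s * r := by simp [wordEval]
    have h2 : wordEval s r [n] = n * s * r := by simp [wordEval]
    rw [h1, h2]
    constructor
    · intro h
      by_contra hx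
      push_neg at hx
      apply h
      apply Subtype.ext
      funext x
      have hne : s.1 (r.1 x) ≠ b := hx x
      show jumpM b (s.1 (r.1 x)) = jumpN b (s.1 (r.1 x))
      by_contra hc
      exact hne ((jump_ne_iff b _).1 hc)
    · rintro ⟨x, hx⟩ h
      have hfun : jumpM b (s.1 (r.1 x)) = jumpN b (s.1 (r.1 x)) :=
        congrFun (congrArg Subtype.val h) x
      exact ((jump_ne_iff b _).2 hx) hfun
  have key : {s : M | s.1 a = b} =
      {s : M | wordEval s r1 [m] ≠ wordEval s r1 [n]} ∩
      {s : M | wordEval s r2 [m] ≠ wordEval s r2 [n]} := by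
    ext s
    simp only [Set.mem_setOf_eq, Set.mem_inter_iff, word_ne]
    constructor
    · intro hs
      refine ⟨⟨a, ?_⟩, ⟨a, ?_⟩⟩
      · show s.1 (rOne a a) = b
        rw [rOne_apply_self]; exact hs
      · show s.1 (rTwo a a) = b
        rw [rTwo_apply_self]; exact hs
    · rintro ⟨⟨x1, hx1⟩, ⟨x2, hx2⟩⟩
      have hsm : StrictMono s.1 := s.2
      have hinj : Function.Injective s.1 := hsm.injective
      have hx1' : s.1 (rOne a x1) = b := hx1
      have hx2' : s.1 (rTwo a x2) = b := hx2
      have hEq : rOne a x1 = rTwo a x2 := hinj (hx1'.trans hx2'.symm)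
      have hval : rOne a x1 = a := by
        rcases rOne_range a x1 with ⟨hA, hB⟩ | hC <;>
          rcases rTwo_range a x2 with hD | ⟨hE, hF⟩ <;> linarith [hEq]
      have : s.1 a = s.1 (rOne a x1) := by rw [hval]
      rw [this]
      exact hx1'
  rw [key]
  exact TopologicalSpace.GenerateOpen.inter _ _
    (TopologicalSpace.GenerateOpen.basic _ ⟨r1, [m], r1, [n], rfl⟩)
    (TopologicalSpace.GenerateOpen.basic _ ⟨r2, [m], r2, [n], rfl⟩)

/-! ### The pointwise topology is a Hausdorff semigroup topology -/

theorem pw_comp_continuous :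
    @Continuous ((ℚ → ℚ) × (ℚ → ℚ)) (ℚ → ℚ)
      (@instTopologicalSpaceProd _ _ (pwTop ℚ) (pwTop ℚ)) (pwTop ℚ)
      (fun p => p.1 ∘ p.2) := by
  letI : TopologicalSpace ℚ := ⊥
  haveI : DiscreteTopology ℚ := ⟨rfl⟩
  show Continuous fun p : (ℚ → ℚ) × (ℚ → ℚ) => p.1 ∘ p.2
  apply continuous_pi
  intro x
  rw [continuous_discrete_rng]
  intro y
  rw [isOpen_iff_mem_nhds]
  rintro ⟨f, g⟩ hfg
  have hfg' : f (g x) = y := hfg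
  have hA : IsOpen ((fun f' : ℚ → ℚ => f' (g x)) ⁻¹' {y}) :=
    (continuous_apply (g x)).isOpen_preimage _ (isOpen_discrete _)
  have hB : IsOpen ((fun g' : ℚ → ℚ => g' x) ⁻¹' {g x}) :=
    (continuous_apply x).isOpen_preimage _ (isOpen_discrete _)
  have hmem : (f, g) ∈ ((fun f' : ℚ → ℚ => f' (g x)) ⁻¹' {y}) ×ˢ
      ((fun g' : ℚ → ℚ => g' x) ⁻¹' {g x}) := ⟨hfg', rfl⟩
  refine Filter.mem_of_superset ((hA.prod hB).mem_nhds hmem) ?_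
  rintro ⟨f', g'⟩ ⟨hh1, hh2⟩
  have h2' : g' x = g x := hh2
  have h1' : f' (g x) = y := hh1
  show f' (g' x) ∈ ({y} : Set ℚ)
  rw [Set.mem_singleton_iff, h2', h1']

theorem pw_hausdorff :
    IsHausdorffSemigroupTopology
      (TopologicalSpace.induced (fun s : ↥strictMonoEndQ => (s.1 : ℚ → ℚ)) (pwTop ℚ)) := by
  constructor
  · -- T2
    letI : TopologicalSpace ℚ := ⊥
    haveI : DiscreteTopology ℚ := ⟨rfl⟩
    letI tM : TopologicalSpace ↥strictMonoEndQ :=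
      TopologicalSpace.induced (fun s : ↥strictMonoEndQ => (s.1 : ℚ → ℚ)) (pwTop ℚ)
    have hemb : @Topology.IsEmbedding ↥strictMonoEndQ (ℚ → ℚ) tM (pwTop ℚ) (fun s => s.1) :=
      ⟨⟨rfl⟩, fun s t hst => Subtype.ext hst⟩
    haveI hT2 : @T2Space (ℚ → ℚ) (pwTop ℚ) :=
      inferInstanceAs (@T2Space (ℚ → ℚ) Pi.topologicalSpace)
    exact hemb.t2Space
  · -- multiplication is continuous
    letI : TopologicalSpace ℚ := ⊥
    haveI : DiscreteTopology ℚ := ⟨rfl⟩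
    letI tM : TopologicalSpace ↥strictMonoEndQ :=
      TopologicalSpace.induced (fun s : ↥strictMonoEndQ => (s.1 : ℚ → ℚ)) (pwTop ℚ)
    apply continuous_induced_rng.2
    have hcoe : @Continuous ↥strictMonoEndQ (ℚ → ℚ) tM (pwTop ℚ) (fun s => s.1) :=
      continuous_induced_dom
    have hpair : @Continuous (↥strictMonoEndQ × ↥strictMonoEndQ) ((ℚ → ℚ) × (ℚ → ℚ))
        (@instTopologicalSpaceProd _ _ tM tM)
        (@instTopologicalSpaceProd _ _ (pwTop ℚ) (pwTop ℚ))
        (fun p => (p.1.1, p.2.1)) :=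
      Continuous.prodMk (hcoe.comp continuous_fst) (hcoe.comp continuous_snd)
    have h := pw_comp_continuous.comp hpair
    exact h

/-! ### The main theorem -/

theorem stmt10 :
    zariskiTopology ↥strictMonoEndQ =
        TopologicalSpace.induced (fun s : ↥strictMonoEndQ => (s.1 : ℚ → ℚ)) (pwTop ℚ) ∧
    IsHausdorffSemigroupTopology
        (TopologicalSpace.induced (fun s : ↥strictMonoEndQ => (s.1 : ℚ → ℚ)) (pwTop ℚ)) ∧
    ∀ T : TopologicalSpace ↥strictMonoEndQ, IsHausdorffSemigroupTopology T →
      T ≤ TopologicalSpace.induced (fun s : ↥strictMonoEndQ => (s.1 : ℚ → ℚ)) (pwTop ℚ) := by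
  have hHaus := pw_hausdorff
  have h1 : TopologicalSpace.induced (fun s : ↥strictMonoEndQ => (s.1 : ℚ → ℚ)) (pwTop ℚ) ≤
      zariskiTopology ↥strictMonoEndQ := le_zariski_of_hausdorff _ hHaus
  have h2 : zariskiTopology ↥strictMonoEndQ ≤
      TopologicalSpace.induced (fun s : ↥strictMonoEndQ => (s.1 : ℚ → ℚ)) (pwTop ℚ) := by
    rw [pwTop_eq_generateFrom]
    erw [induced_generateFrom_eq]
    refine le_generateFrom (t := zariskiTopology ↥strictMonoEndQ) ?_
    rintro U ⟨V, ⟨a, b, rfl⟩, rfl⟩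
    have h : (fun s : ↥strictMonoEndQ => (s.1 : ℚ → ℚ)) ⁻¹' {f : ℚ → ℚ | f a = b}
        = {s : ↥strictMonoEndQ | s.1 a = b} := rfl
    erw [h]
    exact zariski_isOpen_eval a b
  have heq : zariskiTopology ↥strictMonoEndQ =
      TopologicalSpace.induced (fun s : ↥strictMonoEndQ => (s.1 : ℚ → ℚ)) (pwTop ℚ) :=
    le_antisymm h2 h1
  exact ⟨heq, hHaus, fun T hT => heq ▸ le_zariski_of_hausdorff T hT⟩
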